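/- The 3-dimensional complex representation given by the matrices σ₁ = diag(−1, −1, 1), σ₂ = −(1/2)·[[0, −√2, −√2],[−√2, 1, −1],[−√2, −1, 1]], and σ₃ = diag(−1, 1, −1) is irreducible: every ℂ-linear subspace of ℂ³ that is invariant under all three matrices is either {0} or all of ℂ³. -/
import Mathlib


open Matrix Complex

noncomputable section

/-- σ₁ = diag(−1, −1, 1). -/
def m1 : Matrix (Fin 3) (Fin 3) ℂ := diagonal ![-1, -1, 1]

/-- σ₃ = diag(−1, 1, −1). -/
def m3 : Matrix (Fin 3) (Fin 3) ℂ := diagonal ![-1, 1, -1]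

/-- σ₂ = −(1/2)·[[0, −√2, −√2],[−√2, 1, −1],[−√2, −1, 1]]. -/
def m2 : Matrix (Fin 3) (Fin 3) ℂ :=
  -(1 / 2 : ℂ) •
    !![0, -(Real.sqrt 2 : ℂ), -(Real.sqrt 2 : ℂ);
       -(Real.sqrt 2 : ℂ), 1, -1;
       -(Real.sqrt 2 : ℂ), -1, 1]

/-- The representation given by σ₁, σ₂, σ₃ is irreducible: every subspace of ℂ³
invariant under all three matrices is {0} or ℂ³. -/
theorem stmt9 (W : Submodule ℂ (Fin 3 → ℂ))
    (h1 : ∀ v ∈ W, m1.mulVec v ∈ W)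
    (h2 : ∀ v ∈ W, m2.mulVec v ∈ W)
    (h3 : ∀ v ∈ W, m3.mulVec v ∈ W) :
    W = ⊥ ∨ W = ⊤ := by
  -- projection lemma
  have proj : ∀ w ∈ W, ∀ i : Fin 3, (w i) • (Pi.single i 1 : Fin 3 → ℂ) ∈ W := by
    intro w hw i
    fin_cases i
    · show w 0 • (Pi.single (0:Fin 3) 1 : Fin 3 → ℂ) ∈ W
      have key : ((1/4 : ℂ)) • (w - m1.mulVec w - m3.mulVec w + m1.mulVec (m3.mulVec w))
        = (w 0) • (Pi.single (0:Fin 3) 1 : Fin 3 → ℂ) := by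
        funext j
        fin_cases j <;>
          simp [m1, m3, Matrix.mulVec_diagonal, Pi.single_apply] <;> ring
      rw [← key]
      exact W.smul_mem _ (W.add_mem (W.sub_mem (W.sub_mem hw (h1 w hw)) (h3 w hw))
        (h1 _ (h3 w hw)))
    · show w 1 • (Pi.single (1:Fin 3) 1 : Fin 3 → ℂ) ∈ W
      have key : ((1/4 : ℂ)) • (w - m1.mulVec w + m3.mulVec w - m1.mulVec (m3.mulVec w))
        = (w 1) • (Pi.single (1:Fin 3) 1 : Fin 3 → ℂ) := by
        funext j
        fin_cases j <;>
          simp [m1, m3, Matrix.mulVec_diagonal, Pi.single_apply] <;> ring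
      rw [← key]
      exact W.smul_mem _ (W.sub_mem (W.add_mem (W.sub_mem hw (h1 w hw)) (h3 w hw))
        (h1 _ (h3 w hw)))
    · show w 2 • (Pi.single (2:Fin 3) 1 : Fin 3 → ℂ) ∈ W
      have key : ((1/2 : ℂ)) • (w + m1.mulVec w)
        = (w 2) • (Pi.single (2:Fin 3) 1 : Fin 3 → ℂ) := by
        funext j
        fin_cases j <;>
          simp [m1, Matrix.mulVec_diagonal, Pi.single_apply] <;> ring
      rw [← key]
      exact W.smul_mem _ (W.add_mem hw (h1 w hw))
  have single_mem : ∀ w ∈ W, ∀ i : Fin 3, w i ≠ 0 → (Pi.single i 1 : Fin 3 → ℂ) ∈ W := by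
    intro w hw i hwi
    have := W.smul_mem (w i)⁻¹ (proj w hw i)
    rwa [smul_smul, inv_mul_cancel₀ hwi, one_smul] at this
  have s2 : (Real.sqrt 2 : ℂ) ≠ 0 := by
    exact Complex.ofReal_ne_zero.mpr (by positivity)
  -- from e0 get e1, e2; from e1 or e2 get e0
  have col : ∀ i j : Fin 3, (m2.mulVec ((Pi.single j 1 : Fin 3 → ℂ))) i = m2 i j := by
    intro i j
    simp [Matrix.mulVec_single]
  have from0 : (Pi.single (0:Fin 3) 1 : Fin 3 → ℂ) ∈ W →
      (∀ i : Fin 3, (Pi.single i 1 : Fin 3 → ℂ) ∈ W) := by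
    intro h0 i
    have hm := h2 _ h0
    fin_cases i
    · exact h0
    · refine single_mem _ hm 1 ?_
      rw [col]
      simpa [m2, Matrix.vecHead, Matrix.vecTail] using s2
    · refine single_mem _ hm 2 ?_
      rw [col]
      simpa [m2, Matrix.vecHead, Matrix.vecTail] using s2
  by_cases hW : W = ⊥
  · exact Or.inl hW
  · right
    obtain ⟨v, hvW, hv⟩ := Submodule.exists_mem_ne_zero_of_ne_bot hW
    obtain ⟨i, hvi⟩ : ∃ i, v i ≠ 0 := by
      by_contra h
      push_neg at h
      exact hv (funext h)
    have hall : ∀ i : Fin 3, (Pi.single i 1 : Fin 3 → ℂ) ∈ W := by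
      have hi := single_mem v hvW i hvi
      fin_cases i
      · exact from0 hi
      · refine from0 ?_
        refine single_mem _ (h2 _ hi) 0 ?_
        rw [col]
        simpa [m2, Matrix.vecHead, Matrix.vecTail] using s2
      · refine from0 ?_
        refine single_mem _ (h2 _ hi) 0 ?_
        rw [col]
        simpa [m2, Matrix.vecHead, Matrix.vecTail] using s2
    rw [eq_top_iff]
    intro x _
    have hx : x = x 0 • (Pi.single (0:Fin 3) 1 : Fin 3 → ℂ) + x 1 • (Pi.single (1:Fin 3) 1 : Fin 3 → ℂ)
        + x 2 • (Pi.single (2:Fin 3) 1 : Fin 3 → ℂ) := by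
      funext j
      fin_cases j <;> simp [Pi.single_apply]
    rw [hx]
    exact W.add_mem (W.add_mem (W.smul_mem _ (hall 0)) (W.smul_mem _ (hall 1)))
      (W.smul_mem _ (hall 2))
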